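/- For every γ ∈ [0, 1/2) there exists a constant C > 0 such that for every natural number N, every t > 0 and every sequence a₁, …, a_N of real numbers, sup_{x ∈ [0,1]} | Σ_{k=1}^N a_k · e^{−t k²π²} · √2 sin(kπx) | ≤ C · t^{(2γ−1)/4} · ( Σ_{k=1}^N (k²π²)^γ a_k² )^{1/2}. -/

import Mathlib

open Finset Real

lemma head_sum (γ : ℝ) (hγ0 : 0 ≤ γ) (hγ1 : 2*γ < 1) (K : ℕ) :
    ∑ k ∈ Finset.range K, ((k:ℝ)+1) ^ (-(2*γ)) ≤ (K:ℝ) ^ (1-2*γ) / (1-2*γ) := by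
  have hp0 : (0:ℝ) < 1-2*γ := by linarith
  set p : ℝ := 1-2*γ with hpdef
  induction K with
  | zero => simp [Real.zero_rpow hp0.ne']
  | succ K ih =>
    rw [Finset.sum_range_succ]
    push_cast
    set m : ℝ := (K:ℝ)+1 with hm
    have hm1 : (1:ℝ) ≤ m := by rw [hm]; have := Nat.cast_nonneg (α := ℝ) K; linarith
    have hm0 : (0:ℝ) < m := by positivity
    have h1m : 1/m ≤ 1 := by rw [div_le_one hm0]; exact hm1
    have hb := rpow_one_add_le_one_add_mul_self (s := -(1/m)) (by linarith) hp0.le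
      (by simp [hpdef]; linarith)
    have e1 : (1:ℝ) + -(1/m) = (K:ℝ)/m := by field_simp; rw [hm]; ring
    rw [e1] at hb
    have hKp : ((K:ℝ))^p ≤ (1 + p * -(1/m)) * m^p := by
      have h2 : ((K:ℝ)/m)^p * m^p = ((K:ℝ))^p := by
        rw [← Real.mul_rpow (by positivity) hm0.le, div_mul_cancel₀ _ hm0.ne']
      calc ((K:ℝ))^p = ((K:ℝ)/m)^p * m^p := h2.symm
        _ ≤ (1 + p * -(1/m)) * m^p := by
            apply mul_le_mul_of_nonneg_right hb (Real.rpow_nonneg hm0.le p)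
    have key : (K:ℝ)^p + p * (m^p/m) ≤ m^p := by
      have h3 : (1 + p * -(1/m)) * m^p = m^p - p * (m^p/m) := by ring
      rw [h3] at hKp; linarith
    have em : m ^ (-(2*γ)) = m^p/m := by
      rw [show -(2*γ) = p - 1 by simp [hpdef], Real.rpow_sub hm0, Real.rpow_one]
    rw [em]
    calc ∑ k ∈ Finset.range K, ((k:ℝ)+1) ^ (-(2*γ)) + m^p/m
        ≤ (K:ℝ)^p/p + m^p/m := by linarith [ih]
      _ = ((K:ℝ)^p + p * (m^p/m))/p := by field_simp
      _ ≤ m^p/p := by gcongr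

lemma geom_tail (b : ℝ) (hb : 0 < b) (M N : ℕ) :
    ∑ k ∈ Finset.Ico M N, Real.exp (-(b*((k:ℝ)+1))) ≤ 1/b := by
  set r : ℝ := Real.exp (-b) with hr
  have hr0 : 0 < r := Real.exp_pos _
  have hr1 : r < 1 := Real.exp_lt_one_iff.mpr (by linarith)
  have hterm : ∀ k : ℕ, Real.exp (-(b*((k:ℝ)+1))) = r^(k+1) := by
    intro k
    rw [hr, ← Real.exp_nat_mul]
    congr 1
    push_cast
    ring
  have h1r : (0:ℝ) < 1 - r := by linarith
  have hgeom : ∀ n : ℕ, ∑ i ∈ Finset.range n, r^i ≤ 1/(1-r) := by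
    intro n
    rw [geom_sum_eq hr1.ne n]
    have h2 : (r^n-1)/(r-1) = (1-r^n)/(1-r) := by rw [← neg_div_neg_eq]; ring_nf
    rw [h2]
    have : 0 ≤ r^n := le_of_lt (pow_pos hr0 n)
    gcongr
    linarith
  have key : ∑ k ∈ Finset.Ico M N, r^(k+1) ≤ r/(1-r) := by
    rcases le_or_gt M N with h | h
    · rw [Finset.sum_Ico_eq_sum_range]
      have : ∀ i ∈ Finset.range (N-M), r^(M+i+1) = r^(M+1) * r^i := by
        intro i _; rw [← pow_add]; ring_nf
      rw [Finset.sum_congr rfl this, ← Finset.mul_sum]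
      calc r^(M+1) * ∑ i ∈ Finset.range (N-M), r^i
          ≤ r^(M+1) * (1/(1-r)) := by
            apply mul_le_mul_of_nonneg_left (hgeom _) (le_of_lt (pow_pos hr0 _))
        _ ≤ r^1 * (1/(1-r)) := by
            apply mul_le_mul_of_nonneg_right _ (one_div_nonneg.mpr h1r.le)
            exact pow_le_pow_of_le_one hr0.le hr1.le (by omega)
        _ = r/(1-r) := by ring
    · rw [Finset.Ico_eq_empty (by omega)]
      simp
      exact div_nonneg hr0.le h1r.le
  have hlast : r/(1-r) ≤ 1/b := by
    have hlog : b ≤ Real.exp b - 1 := by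
      have := Real.add_one_le_exp b
      linarith
    rw [div_le_div_iff₀ (by linarith) hb]
    have he : r * (Real.exp b - 1) = 1 - r := by
      rw [hr]
      have : Real.exp (-b) * Real.exp b = 1 := by
        rw [← Real.exp_add]; simp
      nlinarith [this]
    calc r * b ≤ r * (Real.exp b - 1) := by
          apply mul_le_mul_of_nonneg_left hlog hr0.le
      _ = 1 - r := he
      _ = 1 * (1 - r) := by ring
  calc ∑ k ∈ Finset.Ico M N, Real.exp (-(b*((k:ℝ)+1)))
      = ∑ k ∈ Finset.Ico M N, r^(k+1) := Finset.sum_congr rfl (fun k _ => hterm k)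
    _ ≤ r/(1-r) := key
    _ ≤ 1/b := hlast

lemma key_sum (γ : ℝ) (hγ0 : 0 ≤ γ) (hγ1 : 2*γ < 1) (t : ℝ) (ht : 0 < t) (N : ℕ) :
    ∑ k ∈ Finset.range N, ((k:ℝ)+1) ^ (-(2*γ)) * Real.exp (-(2*Real.pi^2*t)*((k:ℝ)+1)^2)
      ≤ (2/(1-2*γ) + 1) * t ^ (γ - 1/2) := by
  have hp0 : (0:ℝ) < 1-2*γ := by linarith
  have hpi : (1:ℝ) ≤ 2*Real.pi ^ 2 := by nlinarith [Real.pi_gt_three]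
  have hc : (0:ℝ) < 2*Real.pi^2*t := by positivity
  set c : ℝ := 2*Real.pi^2*t with hcdef
  have htpow : (0:ℝ) < t ^ (γ - 1/2) := Real.rpow_pos_of_pos ht _
  have hC1 : (1:ℝ) ≤ 2/(1-2*γ) + 1 := by
    have : 0 < 2/(1-2*γ) := by positivity
    linarith
  have hterm_nonneg : ∀ k : ℕ, 0 ≤ ((k:ℝ)+1) ^ (-(2*γ)) * Real.exp (-c*((k:ℝ)+1)^2) := by
    intro k; positivity
  rcases le_or_gt 1 t with ht1 | ht1
  · -- case t ≥ 1 : compare with geometric series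
    have hb : ∑ k ∈ Finset.range N, ((k:ℝ)+1) ^ (-(2*γ)) * Real.exp (-c*((k:ℝ)+1)^2)
        ≤ ∑ k ∈ Finset.range N, Real.exp (-(c*((k:ℝ)+1))) := by
      apply Finset.sum_le_sum
      intro k _
      have hk1 : (1:ℝ) ≤ (k:ℝ)+1 := by
        have := Nat.cast_nonneg (α := ℝ) k; linarith
      have h1 : ((k:ℝ)+1) ^ (-(2*γ)) ≤ 1 :=
        Real.rpow_le_one_of_one_le_of_nonpos hk1 (by linarith)
      have h2 : Real.exp (-c*((k:ℝ)+1)^2) ≤ Real.exp (-(c*((k:ℝ)+1))) := by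
        apply Real.exp_le_exp.mpr
        nlinarith [mul_nonneg (mul_nonneg hc.le (by positivity : (0:ℝ) ≤ (k:ℝ)+1))
          (by linarith : (0:ℝ) ≤ (k:ℝ)+1-1)]
      calc ((k:ℝ)+1) ^ (-(2*γ)) * Real.exp (-c*((k:ℝ)+1)^2)
          ≤ 1 * Real.exp (-(c*((k:ℝ)+1))) :=
            mul_le_mul h1 h2 (Real.exp_pos _).le zero_le_one
        _ = Real.exp (-(c*((k:ℝ)+1))) := one_mul _
    have hgeo : ∑ k ∈ Finset.range N, Real.exp (-(c*((k:ℝ)+1))) ≤ 1/c := by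
      have := geom_tail c hc 0 N
      rwa [Nat.Ico_zero_eq_range] at this
    have h1c : 1/c ≤ 1/t := by
      apply one_div_le_one_div_of_le ht
      rw [hcdef]; nlinarith
    have h1t : 1/t ≤ t ^ (γ - 1/2) := by
      rw [one_div, ← Real.rpow_neg_one t]
      exact Real.rpow_le_rpow_of_exponent_le ht1 (by linarith)
    calc ∑ k ∈ Finset.range N, ((k:ℝ)+1) ^ (-(2*γ)) * Real.exp (-c*((k:ℝ)+1)^2)
        ≤ 1/c := hb.trans hgeo
      _ ≤ t ^ (γ - 1/2) := h1c.trans h1t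
      _ ≤ (2/(1-2*γ) + 1) * t ^ (γ - 1/2) := le_mul_of_one_le_left htpow.le hC1
  · -- case t < 1
    set s : ℝ := t ^ (-(1/2) : ℝ) with hs
    have hs0 : 0 < s := Real.rpow_pos_of_pos ht _
    have hs1 : 1 ≤ s :=
      Real.one_le_rpow_of_pos_of_le_one_of_nonpos ht ht1.le (by norm_num)
    set K : ℕ := ⌈s⌉₊ with hK
    have hsK : s ≤ (K:ℝ) := Nat.le_ceil s
    have hK2 : (K:ℝ) ≤ 2*s := by
      have := Nat.ceil_lt_add_one hs0.le
      rw [← hK] at this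
      linarith
    have hK0 : (0:ℝ) < (K:ℝ) := lt_of_lt_of_le (by linarith) hsK
    -- head bound
    have headB : ∑ k ∈ Finset.range K, ((k:ℝ)+1) ^ (-(2*γ)) * Real.exp (-c*((k:ℝ)+1)^2)
        ≤ (2/(1-2*γ)) * t ^ (γ - 1/2) := by
      have h1 : ∑ k ∈ Finset.range K, ((k:ℝ)+1) ^ (-(2*γ)) * Real.exp (-c*((k:ℝ)+1)^2)
          ≤ ∑ k ∈ Finset.range K, ((k:ℝ)+1) ^ (-(2*γ)) := by
        apply Finset.sum_le_sum
        intro k _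
        have hexp : Real.exp (-c*((k:ℝ)+1)^2) ≤ 1 := by
          rw [Real.exp_le_one_iff]
          have : (0:ℝ) ≤ c * ((k:ℝ)+1)^2 := by positivity
          linarith
        calc ((k:ℝ)+1) ^ (-(2*γ)) * Real.exp (-c*((k:ℝ)+1)^2)
            ≤ ((k:ℝ)+1) ^ (-(2*γ)) * 1 :=
              mul_le_mul_of_nonneg_left hexp (by positivity)
          _ = ((k:ℝ)+1) ^ (-(2*γ)) := mul_one _
      have h2 := head_sum γ hγ0 hγ1 K
      have h3 : (K:ℝ) ^ (1-2*γ) ≤ 2 * t ^ (γ - 1/2) := by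
        calc (K:ℝ) ^ (1-2*γ) ≤ (2*s) ^ (1-2*γ) :=
              Real.rpow_le_rpow hK0.le hK2 hp0.le
          _ = 2 ^ (1-2*γ) * s ^ (1-2*γ) := Real.mul_rpow (by norm_num) hs0.le
          _ ≤ 2 * s ^ (1-2*γ) := by
              apply mul_le_mul_of_nonneg_right _ (Real.rpow_nonneg hs0.le _)
              calc (2:ℝ) ^ (1-2*γ) ≤ 2 ^ (1:ℝ) :=
                    Real.rpow_le_rpow_of_exponent_le one_le_two (by linarith)
                _ = 2 := Real.rpow_one 2
          _ = 2 * t ^ (γ - 1/2) := by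
              congr 1
              rw [hs, ← Real.rpow_mul ht.le]
              congr 1
              ring
      calc ∑ k ∈ Finset.range K, ((k:ℝ)+1) ^ (-(2*γ)) * Real.exp (-c*((k:ℝ)+1)^2)
          ≤ (K:ℝ) ^ (1-2*γ) / (1-2*γ) := h1.trans h2
        _ ≤ (2 * t ^ (γ - 1/2)) / (1-2*γ) := by gcongr
        _ = (2/(1-2*γ)) * t ^ (γ - 1/2) := by ring
    -- tail bound
    have tailB : ∑ k ∈ Finset.Ico K N, ((k:ℝ)+1) ^ (-(2*γ)) * Real.exp (-c*((k:ℝ)+1)^2)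
        ≤ t ^ (γ - 1/2) := by
      have hcK : 0 < c * (K:ℝ) := by positivity
      have h1 : ∑ k ∈ Finset.Ico K N, ((k:ℝ)+1) ^ (-(2*γ)) * Real.exp (-c*((k:ℝ)+1)^2)
          ≤ ∑ k ∈ Finset.Ico K N, (K:ℝ) ^ (-(2*γ)) * Real.exp (-((c*(K:ℝ))*((k:ℝ)+1))) := by
        apply Finset.sum_le_sum
        intro k hk
        have hkK : (K:ℝ) ≤ (k:ℝ) := by exact_mod_cast (Finset.mem_Ico.mp hk).1
        have hKj : (K:ℝ) ≤ (k:ℝ)+1 := by linarith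
        have ha : ((k:ℝ)+1) ^ (-(2*γ)) ≤ (K:ℝ) ^ (-(2*γ)) :=
          Real.rpow_le_rpow_of_nonpos hK0 hKj (by linarith)
        have hb : Real.exp (-c*((k:ℝ)+1)^2) ≤ Real.exp (-((c*(K:ℝ))*((k:ℝ)+1))) := by
          apply Real.exp_le_exp.mpr
          nlinarith [mul_nonneg (mul_nonneg hc.le (by positivity : (0:ℝ) ≤ (k:ℝ)+1))
            (by linarith : (0:ℝ) ≤ (k:ℝ)+1-(K:ℝ))]
        exact mul_le_mul ha hb (Real.exp_pos _).le (Real.rpow_nonneg hK0.le _)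
      have h2 : ∑ k ∈ Finset.Ico K N, (K:ℝ) ^ (-(2*γ)) * Real.exp (-((c*(K:ℝ))*((k:ℝ)+1)))
          ≤ (K:ℝ) ^ (-(2*γ)) * (1/(c*(K:ℝ))) := by
        rw [← Finset.mul_sum]
        exact mul_le_mul_of_nonneg_left (geom_tail _ hcK K N) (Real.rpow_nonneg hK0.le _)
      have h3 : (K:ℝ) ^ (-(2*γ)) * (1/(c*(K:ℝ))) = (K:ℝ) ^ (-(2*γ)-1) * (1/c) := by
        rw [Real.rpow_sub hK0, Real.rpow_one]
        field_simp
      have h4 : (K:ℝ) ^ (-(2*γ)-1) ≤ s ^ (-(2*γ)-1) :=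
        Real.rpow_le_rpow_of_nonpos hs0 hsK (by linarith)
      have h5 : s ^ (-(2*γ)-1) * (1/c) ≤ t ^ (γ - 1/2) := by
        have e1 : s ^ (-(2*γ)-1) = t ^ (γ + 1/2) := by
          rw [hs, ← Real.rpow_mul ht.le]
          congr 1
          ring
        rw [e1, hcdef]
        have e2 : t ^ (γ + 1/2) * (1/(2*Real.pi^2*t)) = t ^ (γ - 1/2) * (1/(2*Real.pi^2)) := by
          rw [show γ+1/2 = (γ-1/2) + 1 by ring, Real.rpow_add ht, Real.rpow_one]
          field_simp
        rw [e2]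
        calc t ^ (γ - 1/2) * (1/(2*Real.pi^2)) ≤ t ^ (γ - 1/2) * 1 := by
              apply mul_le_mul_of_nonneg_left _ htpow.le
              rw [div_le_one (by positivity)]
              linarith
          _ = t ^ (γ - 1/2) := mul_one _
      calc ∑ k ∈ Finset.Ico K N, ((k:ℝ)+1) ^ (-(2*γ)) * Real.exp (-c*((k:ℝ)+1)^2)
          ≤ (K:ℝ) ^ (-(2*γ)) * (1/(c*(K:ℝ))) := h1.trans h2
        _ = (K:ℝ) ^ (-(2*γ)-1) * (1/c) := h3
        _ ≤ s ^ (-(2*γ)-1) * (1/c) := by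
            apply mul_le_mul_of_nonneg_right h4 (by positivity)
        _ ≤ t ^ (γ - 1/2) := h5
    -- combine
    rcases le_or_gt N K with hNK | hNK
    · have hsub : ∑ k ∈ Finset.range N, ((k:ℝ)+1) ^ (-(2*γ)) * Real.exp (-c*((k:ℝ)+1)^2)
          ≤ ∑ k ∈ Finset.range K, ((k:ℝ)+1) ^ (-(2*γ)) * Real.exp (-c*((k:ℝ)+1)^2) :=
        Finset.sum_le_sum_of_subset_of_nonneg (Finset.range_subset_range.mpr hNK)
          (fun k _ _ => hterm_nonneg k)
      calc ∑ k ∈ Finset.range N, ((k:ℝ)+1) ^ (-(2*γ)) * Real.exp (-c*((k:ℝ)+1)^2)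
          ≤ (2/(1-2*γ)) * t ^ (γ - 1/2) := hsub.trans headB
        _ ≤ (2/(1-2*γ) + 1) * t ^ (γ - 1/2) := by nlinarith
    · have hsplit : ∑ k ∈ Finset.range N, ((k:ℝ)+1) ^ (-(2*γ)) * Real.exp (-c*((k:ℝ)+1)^2)
          = ∑ k ∈ Finset.range K, ((k:ℝ)+1) ^ (-(2*γ)) * Real.exp (-c*((k:ℝ)+1)^2)
            + ∑ k ∈ Finset.Ico K N, ((k:ℝ)+1) ^ (-(2*γ)) * Real.exp (-c*((k:ℝ)+1)^2) := by
        rw [Finset.range_eq_Ico, Finset.range_eq_Ico]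
        exact (Finset.sum_Ico_consecutive _ (Nat.zero_le K) hNK.le).symm
      rw [hsplit]
      have := add_le_add headB tailB
      calc _ ≤ (2/(1-2*γ)) * t ^ (γ - 1/2) + t ^ (γ - 1/2) := this
        _ = (2/(1-2*γ) + 1) * t ^ (γ - 1/2) := by ring

/-- Coefficient form of `‖P_N S(t)ψ‖_{L^∞} ≤ C t^{(2γ-1)/4} ‖ψ‖_{Ḣ^γ}` for `γ ∈ [0,1/2)`. -/
theorem stmt8 (γ : ℝ) (hγ : γ ∈ Set.Ico (0:ℝ) (1/2)) :
    ∃ C : ℝ, 0 < C ∧ ∀ (N : ℕ) (t : ℝ), 0 < t → ∀ a : ℕ → ℝ,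
      (⨆ x : Set.Icc (0:ℝ) 1,
        |∑ k ∈ Finset.range N,
          a (k+1) * Real.exp (-t * (((k:ℝ)+1)^2 * Real.pi^2)) *
            (Real.sqrt 2 * Real.sin (((k:ℝ)+1) * Real.pi * (x:ℝ)))|)
      ≤ C * t ^ ((2*γ - 1)/4) *
        (∑ k ∈ Finset.range N,
          ((((k:ℝ)+1)^2 * Real.pi^2) ^ γ) * (a (k+1))^2) ^ ((1:ℝ)/2) := by
  obtain ⟨hγ0, hγhalf⟩ := hγ
  have hγ1 : 2*γ < 1 := by linarith
  have hp0 : (0:ℝ) < 1-2*γ := by linarith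
  have hpi1 : (1:ℝ) ≤ Real.pi^2 := by nlinarith [Real.pi_gt_three]
  set C2 : ℝ := 2*(2/(1-2*γ) + 1) with hC2
  have hC2pos : 0 < C2 := by positivity
  refine ⟨Real.sqrt C2, Real.sqrt_pos.mpr hC2pos, ?_⟩
  intro N t ht a
  haveI : Nonempty (Set.Icc (0:ℝ) 1) := ⟨⟨0, by norm_num⟩⟩
  set lam : ℕ → ℝ := fun k => ((k:ℝ)+1)^2 * Real.pi^2 with hlam
  have hlampos : ∀ k : ℕ, 0 < lam k := by
    intro k; positivity
  set B : ℝ := ∑ k ∈ Finset.range N, (lam k) ^ γ * (a (k+1))^2 with hB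
  have hBnonneg : 0 ≤ B := by
    apply Finset.sum_nonneg
    intro k _
    positivity
  set f : ℕ → ℝ := fun k => (lam k) ^ (γ/2) * |a (k+1)| with hf
  set g : ℕ → ℝ := fun k => Real.sqrt 2 * (lam k) ^ (-(γ/2)) * Real.exp (-t * lam k) with hg
  -- sum of f^2
  have hf2 : ∑ k ∈ Finset.range N, f k ^ 2 = B := by
    apply Finset.sum_congr rfl
    intro k _
    simp only [hf]
    rw [mul_pow, sq_abs, ← Real.rpow_natCast ((lam k) ^ (γ/2)) 2,
      ← Real.rpow_mul (hlampos k).le]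
    norm_num
  -- sum of g^2 bound
  have hg2 : ∑ k ∈ Finset.range N, g k ^ 2 ≤ C2 * t ^ (γ - 1/2) := by
    have hterm : ∀ k ∈ Finset.range N, g k ^ 2
        ≤ 2 * (((k:ℝ)+1) ^ (-(2*γ)) * Real.exp (-(2*Real.pi^2*t)*((k:ℝ)+1)^2)) := by
      intro k _
      have e1 : g k ^ 2 = 2 * (lam k) ^ (-γ) * Real.exp (-t * lam k) ^ 2 := by
        simp only [hg]
        rw [mul_pow, mul_pow, Real.sq_sqrt (by norm_num : (0:ℝ) ≤ 2),
          ← Real.rpow_natCast ((lam k) ^ (-(γ/2))) 2, ← Real.rpow_mul (hlampos k).le]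
        norm_num
      have e2 : Real.exp (-t * lam k) ^ 2 = Real.exp (-(2*Real.pi^2*t)*((k:ℝ)+1)^2) := by
        rw [sq, ← Real.exp_add]
        congr 1
        simp only [hlam]
        ring
      have e3 : (lam k) ^ (-γ) ≤ ((k:ℝ)+1) ^ (-(2*γ)) := by
        simp only [hlam]
        rw [Real.mul_rpow (by positivity) (by positivity)]
        have e4 : (((k:ℝ)+1)^2) ^ (-γ) = ((k:ℝ)+1) ^ (-(2*γ)) := by
          rw [← Real.rpow_natCast ((k:ℝ)+1) 2, ← Real.rpow_mul (by positivity)]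
          norm_num
        rw [e4]
        calc ((k:ℝ)+1) ^ (-(2*γ)) * (Real.pi^2) ^ (-γ)
            ≤ ((k:ℝ)+1) ^ (-(2*γ)) * 1 := by
              apply mul_le_mul_of_nonneg_left
                (Real.rpow_le_one_of_one_le_of_nonpos hpi1 (by linarith))
                (Real.rpow_nonneg (by positivity) _)
          _ = ((k:ℝ)+1) ^ (-(2*γ)) := mul_one _
      rw [e1, e2]
      have : (lam k) ^ (-γ) * Real.exp (-(2*Real.pi^2*t)*((k:ℝ)+1)^2)
          ≤ ((k:ℝ)+1) ^ (-(2*γ)) * Real.exp (-(2*Real.pi^2*t)*((k:ℝ)+1)^2) :=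
        mul_le_mul_of_nonneg_right e3 (Real.exp_pos _).le
      linarith
    calc ∑ k ∈ Finset.range N, g k ^ 2
        ≤ ∑ k ∈ Finset.range N,
            2 * (((k:ℝ)+1) ^ (-(2*γ)) * Real.exp (-(2*Real.pi^2*t)*((k:ℝ)+1)^2)) :=
          Finset.sum_le_sum hterm
      _ = 2 * ∑ k ∈ Finset.range N,
            ((k:ℝ)+1) ^ (-(2*γ)) * Real.exp (-(2*Real.pi^2*t)*((k:ℝ)+1)^2) :=
          (Finset.mul_sum _ _ _).symm
      _ ≤ 2 * ((2/(1-2*γ) + 1) * t ^ (γ - 1/2)) := by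
          apply mul_le_mul_of_nonneg_left (key_sum γ hγ0 hγ1 t ht N) (by norm_num)
      _ = C2 * t ^ (γ - 1/2) := by rw [hC2]; ring
  -- pointwise bound
  apply ciSup_le
  intro x
  have hpoint : |∑ k ∈ Finset.range N,
        a (k+1) * Real.exp (-t * (((k:ℝ)+1)^2 * Real.pi^2)) *
          (Real.sqrt 2 * Real.sin (((k:ℝ)+1) * Real.pi * (x:ℝ)))|
      ≤ ∑ k ∈ Finset.range N, f k * g k := by
    calc |∑ k ∈ Finset.range N,
          a (k+1) * Real.exp (-t * (((k:ℝ)+1)^2 * Real.pi^2)) *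
            (Real.sqrt 2 * Real.sin (((k:ℝ)+1) * Real.pi * (x:ℝ)))|
        ≤ ∑ k ∈ Finset.range N,
          |a (k+1) * Real.exp (-t * (((k:ℝ)+1)^2 * Real.pi^2)) *
            (Real.sqrt 2 * Real.sin (((k:ℝ)+1) * Real.pi * (x:ℝ)))| :=
          Finset.abs_sum_le_sum_abs _ _
      _ ≤ ∑ k ∈ Finset.range N, f k * g k := by
          apply Finset.sum_le_sum
          intro k _
          have hfg : f k * g k = |a (k+1)| * Real.exp (-t * lam k) * Real.sqrt 2 := by
            simp only [hf, hg]
            have : (lam k) ^ (γ/2) * (lam k) ^ (-(γ/2)) = 1 := by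
              rw [← Real.rpow_add (hlampos k)]
              norm_num
            calc (lam k) ^ (γ/2) * |a (k+1)| *
                  (Real.sqrt 2 * (lam k) ^ (-(γ/2)) * Real.exp (-t * lam k))
                = ((lam k) ^ (γ/2) * (lam k) ^ (-(γ/2))) *
                  (|a (k+1)| * Real.exp (-t * lam k) * Real.sqrt 2) := by ring
              _ = |a (k+1)| * Real.exp (-t * lam k) * Real.sqrt 2 := by
                  rw [this, one_mul]
          rw [hfg]
          rw [abs_mul, abs_mul, Real.abs_exp]
          have h2 : |Real.sqrt 2 * Real.sin (((k:ℝ)+1) * Real.pi * (x:ℝ))| ≤ Real.sqrt 2 := by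
            rw [abs_mul, abs_of_nonneg (Real.sqrt_nonneg 2)]
            calc Real.sqrt 2 * |Real.sin (((k:ℝ)+1) * Real.pi * (x:ℝ))|
                ≤ Real.sqrt 2 * 1 :=
                  mul_le_mul_of_nonneg_left (Real.abs_sin_le_one _) (Real.sqrt_nonneg 2)
              _ = Real.sqrt 2 := mul_one _
          have : lam k = ((k:ℝ)+1)^2 * Real.pi^2 := rfl
          rw [← this]
          exact mul_le_mul_of_nonneg_left h2 (by positivity)
  have hCS : ∑ k ∈ Finset.range N, f k * g k
      ≤ Real.sqrt (∑ k ∈ Finset.range N, f k ^ 2) *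
        Real.sqrt (∑ k ∈ Finset.range N, g k ^ 2) :=
    Real.sum_mul_le_sqrt_mul_sqrt _ _ _
  have hgs : Real.sqrt (∑ k ∈ Finset.range N, g k ^ 2)
      ≤ Real.sqrt C2 * t ^ ((2*γ - 1)/4) := by
    calc Real.sqrt (∑ k ∈ Finset.range N, g k ^ 2)
        ≤ Real.sqrt (C2 * t ^ (γ - 1/2)) := Real.sqrt_le_sqrt hg2
      _ = Real.sqrt C2 * Real.sqrt (t ^ (γ - 1/2)) := Real.sqrt_mul hC2pos.le _
      _ = Real.sqrt C2 * t ^ ((2*γ - 1)/4) := by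
          congr 1
          rw [Real.sqrt_eq_rpow, ← Real.rpow_mul ht.le]
          congr 1
          ring
  calc |∑ k ∈ Finset.range N,
        a (k+1) * Real.exp (-t * (((k:ℝ)+1)^2 * Real.pi^2)) *
          (Real.sqrt 2 * Real.sin (((k:ℝ)+1) * Real.pi * (x:ℝ)))|
      ≤ Real.sqrt (∑ k ∈ Finset.range N, f k ^ 2) *
        Real.sqrt (∑ k ∈ Finset.range N, g k ^ 2) := hpoint.trans hCS
    _ ≤ Real.sqrt B * (Real.sqrt C2 * t ^ ((2*γ - 1)/4)) := by
        rw [hf2]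
        exact mul_le_mul_of_nonneg_left hgs (Real.sqrt_nonneg B)
    _ = Real.sqrt C2 * t ^ ((2*γ - 1)/4) * B ^ ((1:ℝ)/2) := by
        rw [Real.sqrt_eq_rpow B]
        ring
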